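/- Let X be an infinite Hausdorff space. Then X is boring (sequentially compact, and there is a finite set F ⊆ X such that every injective convergent sequence in X converges to a point of F) if and only if X is a disjoint union of finitely many open subspaces, each homeomorphic to the one-point compactification of a discrete space. -/

import Mathlib

open Set

/-- The ideal `Fin ⊗ Fin` on `ω²`: sets all but finitely many of whose
vertical sections are finite. -/
def FinFin : Set (Set (ℕ × ℕ)) :=
  {A | {n : ℕ | ¬ ({m : ℕ | (n, m) ∈ A}).Finite}.Finite}

/-- The `i`-th section of a subset of `ω³`. -/
def BIsec (i : ℕ) (A : Set (ℕ × ℕ × ℕ)) : Set (ℕ × ℕ) := {p | (i, p) ∈ A}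

/-- The ideal `BI` on `ω³`. -/
def BI : Set (Set (ℕ × ℕ × ℕ)) :=
  {A | ∃ k : ℕ, (∀ i < k, BIsec i A ∈ FinFin) ∧ ∀ i ≥ k, (BIsec i A).Finite}

/-- `I` is an ideal on `X`: contains all finite sets, closed under subsets and
finite unions, and proper. -/
def IsIdeal {X : Type*} (I : Set (Set X)) : Prop :=
  (∀ A : Set X, A.Finite → A ∈ I) ∧
  (∀ A B : Set X, A ∈ I → B ⊆ A → B ∈ I) ∧
  (∀ A B : Set X, A ∈ I → B ∈ I → A ∪ B ∈ I) ∧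
  (Set.univ : Set X) ∉ I

/-- A Hausdorff space is *boring* if it is sequentially compact and some finite
set receives the limits of all injective convergent sequences. -/
def Boring (X : Type*) [TopologicalSpace X] : Prop :=
  SeqCompactSpace X ∧ ∃ F : Finset X, ∀ (x : ℕ → X) (l : X),
    Function.Injective x → Filter.Tendsto x Filter.atTop (nhds l) → l ∈ F

/-- The sequence `(x n)_{n ∈ A}` converges to `l`. -/
def ConvAlong {X : Type*} [TopologicalSpace X] (A : Set ℕ) (x : ℕ → X) (l : X) : Prop :=
  ∀ U ∈ nhds l, {n ∈ A | x n ∉ U}.Finite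

/-- `X ∈ FinBW(I)`: every sequence converges along some `I`-positive index set. -/
def FinBW (I : Set (Set ℕ)) (X : Type*) [TopologicalSpace X] : Prop :=
  ∀ x : ℕ → X, ∃ A : Set ℕ, A ∉ I ∧ ∃ l : X, ConvAlong A x l

/-- The one-point compactification of the discrete space on `D`. -/
noncomputable def OnePointDiscreteTop (D : Type) : TopologicalSpace (OnePoint D) :=
  letI : TopologicalSpace D := ⊥
  inferInstance

open Filter Topology

section OnePointDisc
variable {D : Type} [TopologicalSpace D] [DiscreteTopology D]

lemma onePoint_disc_seq (z : ℕ → OnePoint D) :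
    ∃ (w : OnePoint D) (φ : ℕ → ℕ), StrictMono φ ∧ Tendsto (z ∘ φ) atTop (𝓝 w) := by
  by_cases h : ∃ v, {n | z n = v}.Infinite
  · obtain ⟨v, hv⟩ := h
    obtain ⟨φ, hφ, hφv⟩ := Filter.extraction_of_frequently_atTop
      (Nat.frequently_atTop_iff_infinite.2 hv)
    refine ⟨v, φ, hφ, ?_⟩
    have : z ∘ φ = fun _ => v := funext fun n => hφv n
    rw [this]; exact tendsto_const_nhds
  · push_neg at h
    refine ⟨OnePoint.infty, id, strictMono_id, ?_⟩
    rw [OnePoint.hasBasis_nhds_infty.tendsto_right_iff]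
    rintro s ⟨-, hsc⟩
    have hsfin : s.Finite := isCompact_iff_finite.1 hsc
    have hfin : {n | z n ∉ ((↑) '' sᶜ ∪ {OnePoint.infty} : Set (OnePoint D))}.Finite := by
      refine (hsfin.biUnion (fun d _ => h (OnePoint.some d))).subset ?_
      intro n hn
      simp only [mem_setOf_eq, mem_union, mem_singleton_iff, not_or] at hn
      obtain ⟨hn1, hn2⟩ := hn
      cases hz : z n with
      | infty => exact absurd hz hn2
      | coe d =>
        refine mem_biUnion ?_ hz
        by_contra hd
        exact hn1 ⟨d, hd, hz ▸ rfl⟩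
    rw [← Nat.cofinite_eq_atTop]
    exact hfin

lemma onePoint_disc_inj_limit {z : ℕ → OnePoint D} {w : OnePoint D}
    (hz : Function.Injective z) (h : Tendsto z atTop (𝓝 w)) : w = OnePoint.infty := by
  cases w with
  | infty => rfl
  | coe d =>
    exfalso
    have hopen : IsOpen ({OnePoint.some d} : Set (OnePoint D)) := by
      have := OnePoint.isOpenMap_coe (X := D) {d} (isOpen_discrete _)
      rwa [Set.image_singleton] at this
    have := h (hopen.mem_nhds rfl)
    rw [mem_map, ← Nat.cofinite_eq_atTop] at this
    have hfin : {n | z n ≠ OnePoint.some d}.Finite := this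
    have : ({n | z n = OnePoint.some d} : Set ℕ).Subsingleton := by
      intro a ha b hb
      exact hz (ha.trans hb.symm)
    have hinf : ({n | z n = OnePoint.some d} : Set ℕ).Finite :=
      this.finite
    have : (Set.univ : Set ℕ).Finite := by
      have : (Set.univ : Set ℕ) = {n | z n ≠ OnePoint.some d} ∪ {n | z n = OnePoint.some d} := by
        ext n; simpa using (em (z n = OnePoint.some d)).symm
      rw [this]; exact hfin.union hinf
    exact Set.infinite_univ this

end OnePointDisc

lemma goodPiece_homeo {X : Type} [TopologicalSpace X] [T1Space X]
    (U : Set X) (q : X) (hq : q ∈ U) (hU : IsOpen U)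
    (hiso : ∀ x ∈ U, x ≠ q → IsOpen ({x} : Set X))
    (hfin : ∀ V : Set X, IsOpen V → q ∈ V → (U \ V).Finite) :
    ∃ D : Type, Nonempty (@Homeomorph (↥U) (OnePoint D) _ (OnePointDiscreteTop D)) := by
  classical
  refine ⟨{x : X // x ∈ U ∧ x ≠ q}, ?_⟩
  set D := {x : X // x ∈ U ∧ x ≠ q} with hD
  letI : TopologicalSpace D := ⊥
  haveI : DiscreteTopology D := ⟨rfl⟩
  let f : ↥U → OnePoint D := fun x =>
    if h : (x : X) = q then OnePoint.infty else OnePoint.some ⟨(x : X), x.2, h⟩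
  let g : OnePoint D → ↥U := fun o => Option.elim o ⟨q, hq⟩ (fun d => ⟨d.1, d.2.1⟩)
  have hgf : ∀ x, g (f x) = x := by
    intro x
    by_cases h : (x : X) = q
    · simp only [f, g, dif_pos h]
      exact Subtype.ext h.symm
    · simp only [f, g, dif_neg h]
      rfl
  have hfg : ∀ o, f (g o) = o := by
    intro o
    cases o with
    | infty =>
      have h0 : g OnePoint.infty = ⟨q, hq⟩ := rfl
      rw [h0]
      exact dif_pos rfl
    | coe d =>
      have h0 : g (OnePoint.some d) = ⟨d.1, d.2.1⟩ := rfl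
      rw [h0]
      exact dif_neg d.2.2
  have hcf : Continuous f := by
    rw [continuous_def]
    intro s hs
    by_cases hinf : OnePoint.infty ∈ s
    · rw [OnePoint.isOpen_iff_of_mem hinf] at hs
      have hKfin : ((OnePoint.some ⁻¹' s : Set D)ᶜ).Finite := isCompact_iff_finite.1 hs.2
      have hK'fin : ((fun d : D => d.1) '' (OnePoint.some ⁻¹' s : Set D)ᶜ).Finite :=
        hKfin.image _
      have heq : f ⁻¹' s = Subtype.val ⁻¹' ((fun d : D => d.1) '' (OnePoint.some ⁻¹' s)ᶜ)ᶜ := by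
        ext x
        simp only [mem_preimage, mem_compl_iff]
        by_cases h : (x : X) = q
        · simp only [f, dif_pos h]
          constructor
          · rintro - ⟨d, -, hdx⟩
            exact d.2.2 (hdx.trans h)
          · intro _; exact hinf
        · simp only [f, dif_neg h]
          constructor
          · rintro hx ⟨d, hd, hdx⟩
            apply hd
            rw [mem_preimage, show d = ⟨(x : X), x.2, h⟩ from Subtype.ext hdx]
            exact hx
          · intro hx
            by_contra hmem
            exact hx ⟨⟨(x : X), x.2, h⟩, hmem, rfl⟩
      rw [heq]
      exact (hK'fin.isClosed.isOpen_compl).preimage continuous_subtype_val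
    · rw [isOpen_iff_forall_mem_open]
      intro x hx
      have hxq : (x : X) ≠ q := by
        intro h
        apply hinf
        simpa only [f, mem_preimage, dif_pos h] using hx
      refine ⟨{x}, by simpa using hx, ?_, rfl⟩
      have h1 : IsOpen ({(x : X)} : Set X) := hiso _ x.2 hxq
      have h2 : Subtype.val ⁻¹' ({(x : X)} : Set X) = ({x} : Set ↥U) := by
        ext y; simp [Subtype.ext_iff]
      rw [← h2]
      exact h1.preimage continuous_subtype_val
  have hcg : Continuous g := by
    rw [continuous_iff_continuousAt]
    intro o
    cases o with
    | infty =>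
      rw [OnePoint.continuousAt_infty']
      intro V hV
      have hgV : g OnePoint.infty = ⟨q, hq⟩ := rfl
      rw [hgV] at hV
      obtain ⟨V', hV'sub, hV'open, hqV'⟩ := mem_nhds_iff.1 hV
      obtain ⟨W, hWopen, hWeq⟩ := isOpen_induced_iff.1 hV'open
      have hqW : q ∈ W := by
        have : (⟨q, hq⟩ : ↥U) ∈ Subtype.val ⁻¹' W := hWeq ▸ hqV'
        exact this
      rw [mem_map, Filter.hasBasis_coclosedCompact.mem_iff]; simp only [and_assoc]
      refine ⟨{d : D | d.1 ∉ W}, isClosed_discrete _, isCompact_iff_finite.2 ?_, ?_⟩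
      · have hinj : Function.Injective (fun d : D => d.1) := fun a b h => Subtype.ext h
        have : {d : D | d.1 ∉ W} ⊆ (fun d : D => d.1) ⁻¹' (U \ W) := by
          intro d hd
          exact ⟨d.2.1, hd⟩
        exact (((hfin W hWopen hqW)).preimage hinj.injOn).subset this
      · intro d hd
        simp only [mem_compl_iff, mem_setOf_eq, not_not] at hd
        show g (OnePoint.some d) ∈ V
        apply hV'sub
        rw [← hWeq]
        exact hd
    | coe d =>
      have hpure : 𝓝 (OnePoint.some d : OnePoint D) = pure (OnePoint.some d) := by
        rw [OnePoint.nhds_coe_eq, nhds_discrete]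
        rfl
      rw [ContinuousAt, hpure]
      exact tendsto_pure_nhds g _
  exact ⟨⟨⟨f, g, hgf, hfg⟩, hcf, hcg⟩⟩

/-- If a limit of an injective sequence exists, it is not an isolated point. -/
lemma limit_not_isolated {X : Type} [TopologicalSpace X] {y : ℕ → X} {l : X}
    (hinj : Function.Injective y) (h : Tendsto y atTop (𝓝 l)) :
    ¬ IsOpen ({l} : Set X) := by
  intro hop
  have := h (hop.mem_nhds rfl)
  rw [mem_map, ← Nat.cofinite_eq_atTop] at this
  have hfin : {n | y n ≠ l}.Finite := this
  have h1 : ({n | y n = l} : Set ℕ).Finite := by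
    have hs : ({n | y n = l} : Set ℕ).Subsingleton := fun a ha b hb => hinj (ha.trans hb.symm)
    exact hs.finite
  have huniv : (Set.univ : Set ℕ) = {n | y n ≠ l} ∪ {n | y n = l} := by
    ext n; simpa using (em (y n = l)).symm
  exact Set.infinite_univ (huniv ▸ hfin.union h1)

theorem stmt_13 (X : Type) [TopologicalSpace X] [T2Space X] [Infinite X] :
    Boring X ↔ ∃ (n : ℕ) (U : Fin n → Set X),
      (∀ i, IsOpen (U i)) ∧ Pairwise (Function.onFun Disjoint U) ∧
      (⋃ i, U i) = Set.univ ∧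
      ∀ i, ∃ D : Type,
        Nonempty (@Homeomorph (↥(U i)) (OnePoint D) _ (OnePointDiscreteTop D)) := by
  classical
  constructor
  · rintro ⟨hSC, F, hF⟩
    haveI := hSC
    -- in any infinite subset we find an injective convergent sequence
    have seqlem : ∀ S : Set X, S.Infinite → ∃ (y : ℕ → X) (l : X),
        Function.Injective y ∧ (∀ n, y n ∈ S) ∧ Tendsto y atTop (𝓝 l) := by
      intro S hS
      let f := Set.Infinite.natEmbedding S hS
      obtain ⟨l, φ, hφ, hconv⟩ := SeqCompactSpace.tendsto_subseq (fun n => ((f n : ↥S) : X))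
      exact ⟨_, l, (Subtype.coe_injective.comp f.injective).comp hφ.injective,
        fun n => (f (φ n)).2, hconv⟩
    set NI : Set X := {x : X | ¬ IsOpen ({x} : Set X)} with hNIdef
    -- Step 1: NI ⊆ F
    have hNIF : NI ⊆ (F : Set X) := by
      intro x hx
      by_contra hxF
      have sep : ∀ p : X, ∃ A B : Set X, IsOpen A ∧ IsOpen B ∧ x ∈ A ∧
          (p ∈ F → p ∈ B ∧ Disjoint A B) := by
        intro p
        by_cases hp : p ∈ F
        · obtain ⟨A, B, hA, hB, hxA, hpB, hAB⟩ :=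
            t2_separation (show x ≠ p from fun h => hxF (h ▸ hp))
          exact ⟨A, B, hA, hB, hxA, fun _ => ⟨hpB, hAB⟩⟩
        · exact ⟨Set.univ, Set.univ, isOpen_univ, isOpen_univ, mem_univ _,
            fun h => absurd h hp⟩
      choose A B hAo hBo hxA hsep using sep
      set W : Set X := ⋂ p ∈ F, A p with hWdef
      have hWo : IsOpen W := isOpen_biInter_finset fun p _ => hAo p
      have hxW : x ∈ W := mem_iInter₂.2 fun p _ => hxA p
      have hWinf : W.Infinite := by
        by_contra hWnot
        rw [Set.not_infinite] at hWnot
        have hWfin := hWnot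
        apply hx
        have hsing : ({x} : Set X) = W ∩ (W \ {x})ᶜ := by
          ext y
          constructor
          · rintro rfl
            exact ⟨hxW, fun h => h.2 rfl⟩
          · rintro ⟨hyW, hyn⟩
            by_contra hyx
            exact hyn ⟨hyW, hyx⟩
        rw [hsing]
        exact hWo.inter ((hWfin.subset diff_subset).isClosed.isOpen_compl)
      obtain ⟨y, l, hyinj, hymem, hytend⟩ := seqlem W hWinf
      have hlF : l ∈ F := hF y l hyinj hytend
      obtain ⟨hlB, hdisj⟩ := hsep l hlF
      have hev : ∀ᶠ n in atTop, y n ∈ B l := hytend ((hBo l).mem_nhds hlB)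
      obtain ⟨n, hn⟩ := hev.exists
      have hyA : y n ∈ A l := by
        have := hymem n
        rw [hWdef] at this
        exact mem_iInter₂.1 this l hlF
      exact Set.disjoint_left.1 hdisj hyA hn
    have hNIfin : NI.Finite := F.finite_toSet.subset hNIF
    have hNIne : NI.Nonempty := by
      obtain ⟨y, l, hyinj, -, hytend⟩ := seqlem Set.univ Set.infinite_univ
      exact ⟨l, limit_not_isolated hyinj hytend⟩
    -- enumerate NI
    set k := hNIfin.toFinset.card with hkdef
    set eNI := hNIfin.toFinset.equivFin with heNI
    set q : Fin k → X := fun i => ((eNI.symm i : hNIfin.toFinset) : X) with hqdef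
    have hqNI : ∀ i, q i ∈ NI := fun i => hNIfin.mem_toFinset.1 (eNI.symm i).2
    have hqinj : Function.Injective q :=
      fun a b h => eNI.symm.injective (Subtype.ext h)
    have hqsurj : ∀ x ∈ NI, ∃ i, q i = x := by
      intro x hx
      refine ⟨eNI ⟨x, hNIfin.mem_toFinset.2 hx⟩, ?_⟩
      simp [hqdef]
    have hk : 0 < k := by
      obtain ⟨x, hx⟩ := hNIne
      exact Finset.card_pos.2 ⟨x, hNIfin.mem_toFinset.2 hx⟩
    -- separate the points of NI by disjoint open sets
    have sep2 : ∀ i j : Fin k, ∃ A B : Set X, IsOpen A ∧ IsOpen B ∧ q i ∈ A ∧ q j ∈ B ∧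
        (i ≠ j → Disjoint A B) := by
      intro i j
      by_cases h : i = j
      · exact ⟨Set.univ, Set.univ, isOpen_univ, isOpen_univ, mem_univ _, mem_univ _,
          fun hne => absurd h hne⟩
      · obtain ⟨A, B, hA, hB, hiA, hjB, hAB⟩ :=
          t2_separation (show q i ≠ q j from fun hqe => h (hqinj hqe))
        exact ⟨A, B, hA, hB, hiA, hjB, fun _ => hAB⟩
    choose A B hAo hBo hqA hqB hABd using sep2
    set W : Fin k → Set X := fun i => (⋂ j, A i j) ∩ (⋂ j, B j i) with hWdef
    have hWo : ∀ i, IsOpen (W i) :=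
      fun i => (isOpen_iInter_of_finite fun j => hAo i j).inter
        (isOpen_iInter_of_finite fun j => hBo j i)
    have hqW : ∀ i, q i ∈ W i :=
      fun i => ⟨mem_iInter.2 fun j => hqA i j, mem_iInter.2 fun j => hqB j i⟩
    have hWd : ∀ i j, i ≠ j → Disjoint (W i) (W j) := by
      intro i j hij
      rw [Set.disjoint_left]
      intro y hyi hyj
      have h1 : y ∈ A i j := mem_iInter.1 hyi.1 j
      have h2 : y ∈ B i j := mem_iInter.1 hyj.2 i
      exact Set.disjoint_left.1 (hABd i j hij) h1 h2
    set R : Set X := (⋃ i, W i)ᶜ with hRdef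
    have hRiso : ∀ x ∈ R, IsOpen ({x} : Set X) := by
      intro x hxR
      by_contra hno
      obtain ⟨i, rfl⟩ := hqsurj x hno
      exact hxR (mem_iUnion.2 ⟨i, hqW i⟩)
    have hRo : IsOpen R := by
      rw [isOpen_iff_forall_mem_open]
      intro x hx
      exact ⟨{x}, singleton_subset_iff.2 hx, hRiso x hx, rfl⟩
    have hRW : ∀ j, Disjoint R (W j) := by
      intro j
      rw [Set.disjoint_left]
      intro y hyR hyW
      exact hyR (mem_iUnion.2 ⟨j, hyW⟩)
    set i0 : Fin k := ⟨0, hk⟩ with hi0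
    set U : Fin k → Set X := fun i => if i = i0 then W i ∪ R else W i with hUdef
    have hWsubU : ∀ i, W i ⊆ U i := by
      intro i
      by_cases h : i = i0
      · simp only [hUdef, if_pos h]; exact subset_union_left
      · simp only [hUdef, if_neg h]; exact subset_rfl
    have hUsub : ∀ i, U i ⊆ W i ∪ R := by
      intro i
      by_cases h : i = i0
      · simp only [hUdef, if_pos h]; exact subset_rfl
      · simp only [hUdef, if_neg h]; exact subset_union_left
    have hUo : ∀ i, IsOpen (U i) := by
      intro i
      by_cases h : i = i0
      · simp only [hUdef, if_pos h]; exact (hWo i).union hRo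
      · simp only [hUdef, if_neg h]; exact hWo i
    have hUd : Pairwise (Function.onFun Disjoint U) := by
      intro i j hij
      have hij' : Disjoint (W i ∪ R) (W j ∪ R) → Disjoint (U i) (U j) := by
        intro h
        exact h.mono (hUsub i) (hUsub j)
      by_cases hi : i = i0
      · have hj : j ≠ i0 := fun h => hij (hi.trans h.symm)
        simp only [Function.onFun, hUdef, if_pos hi, if_neg hj]
        exact Set.disjoint_union_left.2 ⟨hWd i j hij, hRW j⟩
      · by_cases hj : j = i0
        · simp only [Function.onFun, hUdef, if_neg hi, if_pos hj]
          exact Set.disjoint_union_right.2 ⟨hWd i j hij, (hRW i).symm⟩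
        · simp only [Function.onFun, hUdef, if_neg hi, if_neg hj]
          exact hWd i j hij
    have hUc : (⋃ i, U i) = Set.univ := by
      ext x
      simp only [mem_univ, iff_true, mem_iUnion]
      by_cases hx : x ∈ ⋃ i, W i
      · obtain ⟨i, hi⟩ := mem_iUnion.1 hx
        exact ⟨i, hWsubU i hi⟩
      · refine ⟨i0, ?_⟩
        have : x ∈ R := hx
        simp [hUdef, this]
    have hUiso : ∀ i, ∀ x ∈ U i, x ≠ q i → IsOpen ({x} : Set X) := by
      intro i x hxU hxq
      rcases hUsub i hxU with hxW | hxR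
      · by_contra hno
        obtain ⟨j, rfl⟩ := hqsurj x hno
        have hji : j ≠ i := fun h => hxq (by rw [h])
        exact Set.disjoint_left.1 (hWd j i hji) (hqW j) hxW
      · exact hRiso x hxR
    have hUq : ∀ i, q i ∈ U i := fun i => hWsubU i (hqW i)
    have hUfin : ∀ i, ∀ V : Set X, IsOpen V → q i ∈ V → (U i \ V).Finite := by
      intro i V hVo hqV
      rw [← Set.not_infinite]
      intro hinfS
      obtain ⟨y, l, hyinj, hymem, hytend⟩ := seqlem _ hinfS
      have hlNI : l ∈ NI := limit_not_isolated hyinj hytend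
      obtain ⟨j, rfl⟩ := hqsurj l hlNI
      by_cases hji : j = i
      · subst hji
        have hev : ∀ᶠ n in atTop, y n ∈ V := hytend (hVo.mem_nhds hqV)
        obtain ⟨n, hn⟩ := hev.exists
        exact (hymem n).2 hn
      · have hev : ∀ᶠ n in atTop, y n ∈ W j := hytend ((hWo j).mem_nhds (hqW j))
        obtain ⟨n, hn⟩ := hev.exists
        have hyU : y n ∈ U i := (hymem n).1
        rcases hUsub i hyU with h1 | h1
        · exact Set.disjoint_left.1 (hWd i j (fun h => hji h.symm)) h1 hn
        · exact Set.disjoint_left.1 (hRW j) h1 hn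
    exact ⟨k, U, hUo, hUd, hUc,
      fun i => goodPiece_homeo (U i) (q i) (hUq i) (hUo i) (hUiso i) (hUfin i)⟩
  · rintro ⟨n, U, hUo, hUd, hUc, hUh⟩
    have key : ∀ i : Fin n,
        (∀ z : ℕ → ↥(U i), ∃ (w : ↥(U i)) (φ : ℕ → ℕ), StrictMono φ ∧
          Tendsto (z ∘ φ) atTop (𝓝 w)) ∧
        ∃ p : X, ∀ (y : ℕ → X) (l : X), Function.Injective y → (∀ m, y m ∈ U i) →
          l ∈ U i → Tendsto y atTop (𝓝 l) → l = p := by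
      intro i
      obtain ⟨D, ⟨e0⟩⟩ := hUh i
      letI : TopologicalSpace D := ⊥
      haveI : DiscreteTopology D := ⟨rfl⟩
      have e : ↥(U i) ≃ₜ OnePoint D := e0
      constructor
      · intro z
        obtain ⟨w, φ, hφ, hconv⟩ := onePoint_disc_seq (e ∘ z)
        refine ⟨e.symm w, φ, hφ, ?_⟩
        have hz : z ∘ φ = e.symm ∘ ((e ∘ z) ∘ φ) := by
          funext m; simp
        rw [hz]
        exact (e.symm.continuous.tendsto w).comp hconv
      · refine ⟨((e.symm OnePoint.infty : ↥(U i)) : X), ?_⟩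
        intro y l hinj hmem hl htend
        set ty : ℕ → ↥(U i) := fun m => ⟨y m, hmem m⟩ with hty
        have htty : Tendsto ty atTop (𝓝 (⟨l, hl⟩ : ↥(U i))) := by
          rw [Topology.IsEmbedding.subtypeVal.tendsto_nhds_iff]
          exact htend
        have hzinj : Function.Injective (e ∘ ty) :=
          e.injective.comp (fun a b hab => hinj (congrArg Subtype.val hab))
        have hwinf := onePoint_disc_inj_limit hzinj ((e.continuous.tendsto _).comp htty)
        have h2 : (⟨l, hl⟩ : ↥(U i)) = e.symm OnePoint.infty := by
          rw [← hwinf]; simp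
        exact congrArg Subtype.val h2
    have keyA := fun i => (key i).1
    choose p hp using fun i => (key i).2
    constructor
    · constructor
      intro x _
      have hpig : ∃ i, {m | x m ∈ U i}.Infinite := by
        by_contra h
        push_neg at h
        have hfin : (Set.univ : Set ℕ).Finite := by
          have hcover : (Set.univ : Set ℕ) = ⋃ i, {m | x m ∈ U i} := by
            ext m
            simp only [mem_univ, true_iff, mem_iUnion, mem_setOf_eq]
            have : x m ∈ ⋃ i, U i := hUc ▸ mem_univ (x m)
            simpa using this
          rw [hcover]
          exact Set.finite_iUnion h
        exact Set.infinite_univ hfin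
      obtain ⟨i, hi⟩ := hpig
      obtain ⟨φ, hφ, hφU⟩ := Filter.extraction_of_frequently_atTop
        (Nat.frequently_atTop_iff_infinite.2 hi)
      set z : ℕ → ↥(U i) := fun m => ⟨x (φ m), hφU m⟩ with hzdef
      obtain ⟨w, ψ, hψ, hconv⟩ := keyA i z
      refine ⟨(w : X), mem_univ _, φ ∘ ψ, hφ.comp hψ, ?_⟩
      have hxz : x ∘ (φ ∘ ψ) = Subtype.val ∘ (z ∘ ψ) := rfl
      rw [hxz]
      exact (continuous_subtype_val.tendsto w).comp hconv
    · refine ⟨Finset.image p Finset.univ, ?_⟩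
      intro x l hinj htend
      obtain ⟨i, hli⟩ := mem_iUnion.1 (hUc ▸ mem_univ l)
      have hev : ∀ᶠ m in atTop, x m ∈ U i := htend ((hUo i).mem_nhds hli)
      obtain ⟨N, hN⟩ := eventually_atTop.1 hev
      have hkey := hp i (fun m => x (m + N)) l
        (hinj.comp (add_left_injective N))
        (fun m => hN _ (Nat.le_add_left N m))
        hli
        (htend.comp (tendsto_add_atTop_nat N))
      rw [hkey]
      exact Finset.mem_image.2 ⟨i, Finset.mem_univ _, rfl⟩
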